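/- Let H₁ and H₂ be complex Hilbert spaces. Let A ∈ B(H₁) be self-adjoint with A² − A ≥ 0, let U ∈ B(H₁,H₂) be such that U*U equals the orthogonal projection onto the closure of ran(A² − A), and let Q₀ ∈ B(H₂) be a projection with U*Q₀ = 0. Set Q₂₂ = U(1 − A)U* + Q₀ ∈ B(H₂). Then the following are equivalent: (i) ker A = ker(1 − A) = {0} and ker U* = {0}; (ii) ker(A² − A) = {0} and ker U* = {0}; (iii) U is unitary, i.e. U*U = 1 and UU* = 1; (iv) ker A = ker(1 − A) = {0} and ker Q₂₂ = ker(1 − Q₂₂) = {0}. -/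

import Mathlib

/- For an idempotent `Q` on a complex Hilbert space `H`, we define (in `B(H)`):
the orthogonal projection onto the closure of the range of an operator,
the range projection `P_{ran Q} = Q (Q + Q* - 1)⁻¹`,
`|Q*| = (Q Q*)^{1/2}`, its Moore-Penrose inverse
`|Q*|^† = (P_{ran Q} P_{ran Q*} P_{ran Q})^{1/2}`,
the matched projection `m(Q) = (1/2)(|Q*| + Q*) |Q*|^† (|Q*| + 1)⁻¹ (|Q*| + Q)`,
and the supplementary projection `s(Q) = m(2 P_{ran Q} - Q)`. -/

noncomputable section

namespace QPP

variable {H : Type*} [NormedAddCommGroup H] [InnerProductSpace ℂ H] [CompleteSpace H]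

/-- The orthogonal projection onto the closure of the range of `T`, as an element of `B(H)`. -/
def closRangeProj (T : H →L[ℂ] H) : H →L[ℂ] H :=
  letI K := (LinearMap.range (T : H →ₗ[ℂ] H)).topologicalClosure
  haveI : CompleteSpace K := (LinearMap.range (T : H →ₗ[ℂ] H)).isClosed_topologicalClosure.completeSpace_coe
  K.subtypeL ∘L K.orthogonalProjectionOnto

/-- The range projection `P_{ran Q} = Q (Q + Q* - 1)⁻¹` of an idempotent `Q`.  (For an
idempotent `Q` the operator `Q + Q* - 1` is invertible, so `Ring.inverse` is its inverse.) -/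
def rangeProj (Q : H →L[ℂ] H) : H →L[ℂ] H :=
  Q * Ring.inverse (Q + star Q - 1)

/-- `|Q*| = (Q Q*)^{1/2}`. -/
def absStar (Q : H →L[ℂ] H) : H →L[ℂ] H :=
  CFC.sqrt (Q * star Q)

/-- `|Q*|^† = (P_{ran Q} P_{ran Q*} P_{ran Q})^{1/2}`, the Moore-Penrose inverse of `|Q*|`. -/
def absStarPinv (Q : H →L[ℂ] H) : H →L[ℂ] H :=
  CFC.sqrt (rangeProj Q * rangeProj (star Q) * rangeProj Q)

/-- The matched projection `m(Q) = (1/2)(|Q*| + Q*) |Q*|^† (|Q*| + 1)⁻¹ (|Q*| + Q)`. -/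
def matchedProj (Q : H →L[ℂ] H) : H →L[ℂ] H :=
  (2 : ℂ)⁻¹ • ((absStar Q + star Q) * absStarPinv Q * Ring.inverse (absStar Q + 1)
      * (absStar Q + Q))

/-- The supplementary projection `s(Q) = m(2 P_{ran Q} - Q)`. -/
def suppProj (Q : H →L[ℂ] H) : H →L[ℂ] H :=
  matchedProj (2 * rangeProj Q - Q)

end QPP

variable {H : Type*} [NormedAddCommGroup H] [InnerProductSpace ℂ H] [CompleteSpace H]

variable {H₁ H₂ : Type*} [NormedAddCommGroup H₁] [InnerProductSpace ℂ H₁] [CompleteSpace H₁]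
  [NormedAddCommGroup H₂] [InnerProductSpace ℂ H₂] [CompleteSpace H₂]

open ContinuousLinearMap in
private lemma aux_ker_apply {E F : Type*} [NormedAddCommGroup E] [NormedSpace ℂ E]
    [NormedAddCommGroup F] [NormedSpace ℂ F] {f : E →L[ℂ] F}
    (hf : LinearMap.ker (f : E →ₗ[ℂ] F) = ⊥) {x : E} (hx : f x = 0) : x = 0 := by
  have h : x ∈ LinearMap.ker (f : E →ₗ[ℂ] F) := LinearMap.mem_ker.mpr hx
  rwa [hf, Submodule.mem_bot] at h

open ContinuousLinearMap in
private lemma aux_ker_eq {E F : Type*} [NormedAddCommGroup E] [NormedSpace ℂ E]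
    [NormedAddCommGroup F] [NormedSpace ℂ F] {f : E →L[ℂ] F}
    (h : ∀ x, f x = 0 → x = 0) : LinearMap.ker (f : E →ₗ[ℂ] F) = ⊥ := by
  rw [Submodule.eq_bot_iff]
  intro x hx
  exact h x (LinearMap.mem_ker.mp hx)

open ContinuousLinearMap in
private lemma aux_mem_orth {E : Type*} [NormedAddCommGroup E] [InnerProductSpace ℂ E]
    [CompleteSpace E] {T : E →L[ℂ] E} (hT : IsSelfAdjoint T) {x : E} (hx : T x = 0) :
    x ∈ (LinearMap.range (T : E →ₗ[ℂ] E))ᗮ := by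
  intro y hy
  obtain ⟨z, rfl⟩ := hy
  rw [← hT.adjoint_eq, ContinuousLinearMap.coe_coe, adjoint_inner_left, hx, inner_zero_right]

open ContinuousLinearMap in
/-- Let `A ∈ B(H₁)` be self-adjoint with `A² - A ≥ 0`, `U ∈ B(H₁, H₂)` with `U* U` the
orthogonal projection onto the closure of `ran(A² - A)`, and `Q₀ ∈ B(H₂)` a projection with
`U* Q₀ = 0`.  With `Q₂₂ = U (1 - A) U* + Q₀`, the following are equivalent:
(i) `ker A = ker (1 - A) = 0` and `ker U* = 0`;
(ii) `ker (A² - A) = 0` and `ker U* = 0`;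
(iii) `U` is unitary;
(iv) `ker A = ker (1 - A) = 0` and `ker Q₂₂ = ker (1 - Q₂₂) = 0`. -/
theorem canonicalRep_unitary_tfae (A : H₁ →L[ℂ] H₁) (U : H₁ →L[ℂ] H₂) (Q₀ : H₂ →L[ℂ] H₂)
    (hAsa : IsSelfAdjoint A) (hApos : 0 ≤ A * A - A)
    (hU : adjoint U ∘L U = QPP.closRangeProj (A * A - A))
    (hQ₀idem : IsIdempotentElem Q₀) (hQ₀sa : IsSelfAdjoint Q₀)
    (hUQ₀ : adjoint U ∘L Q₀ = 0) :
    List.TFAE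
      [LinearMap.ker (A : H₁ →ₗ[ℂ] H₁) = ⊥ ∧ LinearMap.ker ((1 - A : H₁ →L[ℂ] H₁) : H₁ →ₗ[ℂ] H₁) = ⊥ ∧ LinearMap.ker (adjoint U : H₂ →ₗ[ℂ] H₁) = ⊥,
       LinearMap.ker ((A * A - A : H₁ →L[ℂ] H₁) : H₁ →ₗ[ℂ] H₁) = ⊥ ∧ LinearMap.ker (adjoint U : H₂ →ₗ[ℂ] H₁) = ⊥,
       adjoint U ∘L U = 1 ∧ U ∘L adjoint U = 1,
       LinearMap.ker (A : H₁ →ₗ[ℂ] H₁) = ⊥ ∧ LinearMap.ker ((1 - A : H₁ →L[ℂ] H₁) : H₁ →ₗ[ℂ] H₁) = ⊥ ∧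
         LinearMap.ker ((U ∘L (1 - A) ∘L adjoint U + Q₀ : H₂ →L[ℂ] H₂) : H₂ →ₗ[ℂ] H₂) = ⊥ ∧
         LinearMap.ker ((1 - (U ∘L (1 - A) ∘L adjoint U + Q₀) : H₂ →L[ℂ] H₂) : H₂ →ₗ[ℂ] H₂) = ⊥] := by
  set T : H₁ →L[ℂ] H₁ := A * A - A with hT
  have hTsa : IsSelfAdjoint T := by
    rw [IsSelfAdjoint, hT, star_sub, star_mul, hAsa.star_eq]
  set K := (LinearMap.range (T : H₁ →ₗ[ℂ] H₁)).topologicalClosure with hK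
  haveI : CompleteSpace K := (LinearMap.range (T : H₁ →ₗ[ℂ] H₁)).isClosed_topologicalClosure.completeSpace_coe
  have hPapply : ∀ x, QPP.closRangeProj T x = (K.orthogonalProjectionOnto x : H₁) := fun x => rfl
  tfae_have h12 : 1 → 2 := by
    rintro ⟨hA, h1A, hU'⟩
    refine ⟨aux_ker_eq fun x hx => ?_, hU'⟩
    have h1 : A (A x - x) = 0 := by
      rw [hT, ContinuousLinearMap.sub_apply, ContinuousLinearMap.mul_apply] at hx
      rw [map_sub]; exact hx
    have h2 : A x - x = 0 := aux_ker_apply hA h1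
    have h3 : (1 - A) x = 0 := by
      rw [ContinuousLinearMap.sub_apply, ContinuousLinearMap.one_apply]
      rw [sub_eq_zero] at h2 ⊢
      exact h2.symm
    exact aux_ker_apply h1A h3
  tfae_have h21 : 2 → 1 := by
    rintro ⟨hT0, hU'⟩
    refine ⟨aux_ker_eq fun x hx => ?_, aux_ker_eq fun x hx => ?_, hU'⟩
    · refine aux_ker_apply hT0 (x := x) ?_
      rw [hT, ContinuousLinearMap.sub_apply, ContinuousLinearMap.mul_apply, hx, map_zero,
        sub_self]
    · have hAx : A x = x := by
        rw [ContinuousLinearMap.sub_apply, ContinuousLinearMap.one_apply, sub_eq_zero] at hx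
        exact hx.symm
      refine aux_ker_apply hT0 (x := x) ?_
      rw [hT, ContinuousLinearMap.sub_apply, ContinuousLinearMap.mul_apply, hAx, hAx, sub_self]
  tfae_have h23 : 2 → 3 := by
    rintro ⟨hT0, hU'⟩
    have hKtop : K = ⊤ := by
      rw [← Submodule.orthogonal_eq_bot_iff, Submodule.eq_bot_iff]
      intro y hy
      have hy' : y ∈ (LinearMap.range (T : H₁ →ₗ[ℂ] H₁))ᗮ :=
        Submodule.orthogonal_le (Submodule.le_topologicalClosure _) hy
      have hTy : T y = 0 := by
        apply ext_inner_left ℂ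
        intro z
        rw [inner_zero_right, ← hTsa.adjoint_eq, adjoint_inner_right]
        exact Submodule.inner_right_of_mem_orthogonal (LinearMap.mem_range.mpr ⟨z, rfl⟩) hy'
      exact aux_ker_apply hT0 hTy
    have hUU : adjoint U ∘L U = 1 := by
      ext x
      have hx : QPP.closRangeProj T x = x := by
        rw [hPapply x]
        exact Submodule.starProjection_eq_self_iff.mpr (hKtop ▸ Submodule.mem_top)
      rw [hU, ContinuousLinearMap.one_apply]
      exact hx
    have key : ∀ y, adjoint U (U y) = y := fun y => by
      simpa using ContinuousLinearMap.ext_iff.mp hUU y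
    refine ⟨hUU, ?_⟩
    ext x
    have h1 : adjoint U (U (adjoint U x) - x) = 0 := by
      rw [map_sub, key, sub_self]
    have h2 := aux_ker_apply hU' h1
    rw [ContinuousLinearMap.comp_apply, ContinuousLinearMap.one_apply, ← sub_eq_zero]
    exact h2
  tfae_have h32 : 3 → 2 := by
    rintro ⟨hUU, hUUs⟩
    constructor
    · refine aux_ker_eq fun x hx => ?_
      have hxo : x ∈ (LinearMap.range (T : H₁ →ₗ[ℂ] H₁))ᗮ := aux_mem_orth hTsa hx
      have hP1 : QPP.closRangeProj T = 1 := hU.symm.trans hUU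
      have hxK : x ∈ K := by
        have h := ContinuousLinearMap.ext_iff.mp hP1 x
        rw [hPapply x, ContinuousLinearMap.one_apply] at h
        exact Submodule.starProjection_eq_self_iff.mp h
      have hle : K ≤ ((LinearMap.range (T : H₁ →ₗ[ℂ] H₁))ᗮ)ᗮ :=
        Submodule.topologicalClosure_minimal _ (Submodule.le_orthogonal_orthogonal _)
          (Submodule.isClosed_orthogonal _)
      have hzero : inner ℂ x x = (0 : ℂ) :=
        Submodule.inner_right_of_mem_orthogonal hxo (hle hxK)
      exact inner_self_eq_zero.mp hzero
    · refine aux_ker_eq fun x hx => ?_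
      have h := ContinuousLinearMap.ext_iff.mp hUUs x
      rw [ContinuousLinearMap.comp_apply, hx, map_zero, ContinuousLinearMap.one_apply] at h
      exact h.symm
  tfae_have h14 : 1 → 4 := by
    rintro ⟨hA, h1A, hU'⟩
    obtain ⟨hUU, hUUs⟩ := h23 (h12 ⟨hA, h1A, hU'⟩)
    have key : ∀ y, adjoint U (U y) = y := fun y => by
      simpa using ContinuousLinearMap.ext_iff.mp hUU y
    have hQ0 : ∀ x, Q₀ x = 0 := fun x => by
      have h1 : adjoint U (Q₀ x) = 0 := by
        simpa using ContinuousLinearMap.ext_iff.mp hUQ₀ x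
      have h2 : U (adjoint U (Q₀ x)) = Q₀ x := by
        simpa using ContinuousLinearMap.ext_iff.mp hUUs (Q₀ x)
      rw [h1, map_zero] at h2
      exact h2.symm
    refine ⟨hA, h1A, aux_ker_eq fun x hx => ?_, aux_ker_eq fun x hx => ?_⟩
    · have hx' : U ((1 - A) (adjoint U x)) = 0 := by
        rw [ContinuousLinearMap.add_apply, hQ0 x, add_zero, ContinuousLinearMap.comp_apply,
          ContinuousLinearMap.comp_apply] at hx
        exact hx
      have h1 : (1 - A) (adjoint U x) = 0 := by
        have h := congrArg (adjoint U) hx'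
        rwa [key, map_zero] at h
      exact aux_ker_apply hU' (aux_ker_apply h1A h1)
    · have hx' : x = U ((1 - A) (adjoint U x)) := by
        rw [ContinuousLinearMap.sub_apply, ContinuousLinearMap.one_apply, sub_eq_zero] at hx
        calc x = (U ∘L (1 - A) ∘L adjoint U + Q₀) x := hx
          _ = U ((1 - A) (adjoint U x)) := by
              rw [ContinuousLinearMap.add_apply, hQ0 x, add_zero,
                ContinuousLinearMap.comp_apply, ContinuousLinearMap.comp_apply]
      have h1 : adjoint U x = (1 - A) (adjoint U x) := by
        conv_lhs => rw [hx', key]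
      have h2 : A (adjoint U x) = 0 := by
        rw [ContinuousLinearMap.sub_apply, ContinuousLinearMap.one_apply] at h1
        have h3 : adjoint U x + A (adjoint U x) = adjoint U x := eq_sub_iff_add_eq.mp h1
        exact add_eq_left.mp h3
      have h3 : adjoint U x = 0 := aux_ker_apply hA h2
      rw [hx', h3, map_zero, map_zero]
  tfae_have h41 : 4 → 1 := by
    rintro ⟨hA, h1A, hk, hk'⟩
    refine ⟨hA, h1A, aux_ker_eq fun x hx => ?_⟩
    have e1 : adjoint U (Q₀ x) = 0 := by
      simpa using ContinuousLinearMap.ext_iff.mp hUQ₀ x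
    have e2 : (U ∘L (1 - A) ∘L adjoint U + Q₀) (Q₀ x) = Q₀ x := by
      rw [ContinuousLinearMap.add_apply, ContinuousLinearMap.comp_apply,
        ContinuousLinearMap.comp_apply, e1, map_zero, map_zero, zero_add]
      have h := ContinuousLinearMap.ext_iff.mp hQ₀idem x
      rwa [ContinuousLinearMap.mul_apply] at h
    have e3 : Q₀ x = 0 := by
      refine aux_ker_apply hk' ?_
      rw [ContinuousLinearMap.sub_apply, ContinuousLinearMap.one_apply, e2, sub_self]
    have e4 : (U ∘L (1 - A) ∘L adjoint U + Q₀) x = 0 := by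
      rw [ContinuousLinearMap.add_apply, e3, add_zero, ContinuousLinearMap.comp_apply,
        ContinuousLinearMap.comp_apply, hx, map_zero, map_zero]
    exact aux_ker_apply hk e4
  tfae_finish

end
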